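/- For all b₁, b₂ ∈ F and c₁ ∈ F^×, if the quadratic form [b₁,b₂] ⊥ ⟨c₁⟩ is isotropic, then [b₁,b₂] ⊥ ⟨c₁⟩ ≃ ℍ ⊥ ⟨c₁⟩, where ℍ = [0,0] is the hyperbolic plane. -/

import Mathlib

/-- The binary quadratic form `[b₁,b₂] : (x,y) ↦ b₁x² + xy + b₂y²` on `F × F`. -/
def binQF (F : Type*) [Field F] (b₁ b₂ : F) : QuadraticForm F (F × F) :=
  LinearMap.BilinMap.toQuadraticMap (LinearMap.mk₂ F
    (fun p q : F × F => b₁ * (p.1 * q.1) + p.1 * q.2 + b₂ * (p.2 * q.2))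
    (fun p p' q => by simp only [Prod.fst_add, Prod.snd_add]; ring)
    (fun a p q => by simp only [Prod.smul_fst, Prod.smul_snd, smul_eq_mul]; ring)
    (fun p q q' => by simp only [Prod.fst_add, Prod.snd_add]; ring)
    (fun a p q => by simp only [Prod.smul_fst, Prod.smul_snd, smul_eq_mul]; ring))

section helper
variable {F : Type*} [Field F] [CharP F 2]

lemma binQF_apply (b₁ b₂ : F) (v : F × F) :
    binQF F b₁ b₂ v = b₁ * (v.1 * v.1) + v.1 * v.2 + b₂ * (v.2 * v.2) := rfl

lemma two_eq_zero : (2 : F) = 0 := by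
  have := CharP.cast_eq_zero F 2; exact_mod_cast this

/-- Change of basis with matrix `(p q; r s)` of "determinant" `ps + qr = 1` (char 2). -/
def mequiv (p q r s : F) (h : p * s + q * r = 1) : (F × F) ≃ₗ[F] (F × F) where
  toFun v := (p * v.1 + q * v.2, r * v.1 + s * v.2)
  invFun v := (s * v.1 + q * v.2, r * v.1 + p * v.2)
  map_add' v w := by simp only [Prod.fst_add, Prod.snd_add, Prod.mk_add_mk]; ring_nf
  map_smul' a v := by
    simp only [Prod.smul_fst, Prod.smul_snd, smul_eq_mul, RingHom.id_apply, Prod.smul_mk]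
    ring_nf
  left_inv v := by
    have h2 : (2 : F) = 0 := two_eq_zero
    ext
    · linear_combination (norm := ring_nf) v.1 * h + q * s * v.2 * h2
    · linear_combination (norm := ring_nf) v.2 * h + p * r * v.1 * h2
  right_inv v := by
    have h2 : (2 : F) = 0 := two_eq_zero
    ext
    · linear_combination (norm := ring_nf) v.1 * h + p * q * v.2 * h2
    · linear_combination (norm := ring_nf) v.2 * h + r * s * v.1 * h2

lemma master (b₁ b₂ b₁' b₂' p q r s : F) (h : p * s + q * r = 1)
    (e1 : b₁' = b₁ * p ^ 2 + p * r + b₂ * r ^ 2)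
    (e2 : b₂' = b₁ * q ^ 2 + q * s + b₂ * s ^ 2) :
    QuadraticMap.Equivalent (binQF F b₁' b₂') (binQF F b₁ b₂) := by
  have h2 : (2 : F) = 0 := two_eq_zero
  exact ⟨{ toLinearEquiv := mequiv p q r s h,
           map_app' := by
             intro v
             simp only [mequiv, binQF_apply, LinearEquiv.coe_mk]
             subst e1 e2
             linear_combination (v.1 * v.2) * h + (b₁ * p * q + b₂ * r * s) * v.1 * v.2 * h2 }⟩

lemma hyp_equiv (b : F) : QuadraticMap.Equivalent (binQF F 0 0) (binQF F 0 b) := by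
  have h2 : (2 : F) = 0 := two_eq_zero
  refine master 0 b 0 0 1 b 0 1 (by ring) (by ring) ?_
  linear_combination -b * h2

/-- z ↦ z + x shift on `(F×F) × F`:  `[c,b] ⊥ ⟨c⟩ ≃ [0,b] ⊥ ⟨c⟩`. -/
lemma zshift (b c : F) :
    QuadraticMap.Equivalent
      ((binQF F c b).prod (c • (QuadraticMap.sq : QuadraticForm F F)))
      ((binQF F 0 b).prod (c • (QuadraticMap.sq : QuadraticForm F F))) := by
  have h2 : (2 : F) = 0 := two_eq_zero
  refine ⟨{ toLinearEquiv := ?_, map_app' := ?_ }⟩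
  · exact
    { toFun := fun v => (v.1, v.2 + v.1.1)
      invFun := fun v => (v.1, v.2 + v.1.1)
      map_add' := fun v w => by
        simp only [Prod.fst_add, Prod.snd_add, Prod.mk_add_mk]; ring_nf
      map_smul' := fun a v => by
        simp only [Prod.smul_fst, Prod.smul_snd, smul_eq_mul, RingHom.id_apply, Prod.smul_mk]
        ring_nf
      left_inv := fun v => by
        ext <;> simp only <;> linear_combination (norm := ring_nf) v.1.1 * h2
      right_inv := fun v => by
        ext <;> simp only <;> linear_combination (norm := ring_nf) v.1.1 * h2 }
  · intro v
    simp only [LinearEquiv.coe_mk, QuadraticMap.prod_apply, binQF_apply, QuadraticMap.smul_apply,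
      QuadraticMap.sq_apply, smul_eq_mul]
    linear_combination c * v.2 * v.1.1 * h2

end helper

/-- over a field of characteristic 2, for `c₁ ≠ 0`, if
`[b₁,b₂] ⊥ ⟨c₁⟩` is isotropic then `[b₁,b₂] ⊥ ⟨c₁⟩ ≃ ℍ ⊥ ⟨c₁⟩`. -/
theorem stmt4 (F : Type*) [Field F] [CharP F 2] (b₁ b₂ c₁ : F) (hc₁ : c₁ ≠ 0)
    (hiso : ∃ v : (F × F) × F, v ≠ 0 ∧
      ((binQF F b₁ b₂).prod (c₁ • (QuadraticMap.sq : QuadraticForm F F))) v = 0) :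
    QuadraticMap.Equivalent
      ((binQF F b₁ b₂).prod (c₁ • (QuadraticMap.sq : QuadraticForm F F)))
      ((binQF F 0 0).prod (c₁ • (QuadraticMap.sq : QuadraticForm F F))) := by
  have h2 : (2 : F) = 0 := two_eq_zero
  obtain ⟨⟨⟨x, y⟩, z⟩, hv, heq⟩ := hiso
  simp only [QuadraticMap.prod_apply, binQF_apply, QuadraticMap.smul_apply,
    QuadraticMap.sq_apply, smul_eq_mul] at heq
  -- heq : b₁*(x*x) + x*y + b₂*(y*y) + c₁*(z*z) = 0
  have qrefl : QuadraticMap.Equivalent (c₁ • (QuadraticMap.sq : QuadraticForm F F))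
      (c₁ • (QuadraticMap.sq : QuadraticForm F F)) := QuadraticMap.Equivalent.refl _
  by_cases hz : z = 0
  · subst hz
    have hxy : (x, y) ≠ (0 : F × F) := by
      intro h; exact hv (by simp [Prod.ext_iff] at h ⊢; exact ⟨h.1, h.2⟩)
    by_cases hy : y = 0
    · subst hy
      have hx : x ≠ 0 := by intro h; exact hxy (by simp [h])
      have hb₁ : b₁ = 0 := by
        have : b₁ * (x * x) = 0 := by linear_combination heq
        rcases mul_eq_zero.mp this with h | h
        · exact h
        · exact absurd h (by simp [hx])
      subst hb₁
      exact ((hyp_equiv b₂).symm.prod qrefl)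
    · -- y ≠ 0 : [b₁,b₂] ≃ [0, b₁/y²] in reverse; basis (x,y),(y⁻¹,0)
      have E : QuadraticMap.Equivalent (binQF F 0 (b₁ / y ^ 2)) (binQF F b₁ b₂) := by
        refine master b₁ b₂ 0 (b₁ / y ^ 2) x y⁻¹ y 0 ?_ ?_ ?_
        · field_simp; ring
        · linear_combination -heq
        · field_simp; ring
      refine (E.symm.prod qrefl).trans ?_
      exact ((hyp_equiv (b₁ / y ^ 2)).symm.prod qrefl)
  · -- z ≠ 0
    by_cases hy : y = 0
    · subst hy
      have hx : x ≠ 0 := by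
        intro h; subst h
        apply hc₁
        have : c₁ * (z * z) = 0 := by linear_combination heq
        rcases mul_eq_zero.mp this with h | h
        · exact h
        · exact absurd h (by simp [hz])
      have E : QuadraticMap.Equivalent (binQF F c₁ (b₂ * (x / z)⁻¹ ^ 2)) (binQF F b₁ b₂) := by
        refine master b₁ b₂ c₁ _ (x / z) 0 0 (x / z)⁻¹ ?_ ?_ ?_
        · field_simp; ring
        · field_simp
          linear_combination -heq + c₁*z*z*h2
        · ring
      refine (E.symm.prod qrefl).trans ?_
      refine (zshift _ c₁).trans ?_
      exact ((hyp_equiv _).symm.prod qrefl)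
    · -- z ≠ 0, y ≠ 0: u = x/z, v = y/z, basis (u,v),(v⁻¹,0)
      have E : QuadraticMap.Equivalent (binQF F c₁ (b₁ * ((y / z)⁻¹) ^ 2)) (binQF F b₁ b₂) := by
        refine master b₁ b₂ c₁ _ (x / z) (y / z)⁻¹ (y / z) 0 ?_ ?_ ?_
        · field_simp; ring
        · field_simp
          linear_combination -heq + c₁*z^2*h2
        · field_simp; ring
      refine (E.symm.prod qrefl).trans ?_
      refine (zshift _ c₁).trans ?_
      exact ((hyp_equiv _).symm.prod qrefl)
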